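/- arXiv:1007.5099 — 2 statements merged into one kernel-verified Lean document; each statement's English description precedes it below -/
import Mathlib

section
/- Let P be a preorder and ω a profunctor on P. Define the right dual ω^⊥ to be the relation relating x to y iff for all z, ω z x implies ¬(y ≤ z), and the left dual ^⊥ω to be the relation relating x to y iff for all z, ω y z implies ¬(z ≤ x). Then ω^⊥ = ¬ω^rev = ^⊥ω, where ¬ω^rev relates x to y iff ω y x fails. That is, with the complement of the reverse ordering (≱) as dualising object, the left and right duals of every profunctor on P coincide and equal the complement of its reverse. -/
/-- For a profunctor `ω` on a preorder `P`, with dualising object the complement of the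
reverse ordering `≱`, the right dual `ω^⊥ (x, y) ↔ ∀ z, ω z x → ¬(y ≤ z)` and the
left dual `^⊥ω (x, y) ↔ ∀ z, ω y z → ¬(z ≤ x)` both coincide with the complement of the
reverse relation `¬ ω^rev`. -/
theorem profunctor_duals_eq_neg_rev (P : Type*) [Preorder P] (ω : P → P → Prop)
    (hω : ∀ a' a b b', a' ≤ a → ω a b → b ≤ b' → ω a' b') :
    (fun x y => ∀ z, ω z x → ¬ (y ≤ z)) = (fun x y => ¬ ω y x) ∧
    (fun x y => ∀ z, ω y z → ¬ (z ≤ x)) = (fun x y => ¬ ω y x) := by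
  constructor <;> funext x y <;> apply propext <;> constructor
  · intro h hyx; exact h y hyx le_rfl
  · intro h z hzx hyz; exact h (hω y z x x hyz hzx le_rfl)
  · intro h hyx; exact h x hyx le_rfl
  · intro h z hyz hzx; exact h (hω y y z x le_rfl hyz hzx)
end

section
/- Let s be a set and ω a binary relation on s. With duals taken with respect to the complement of equality — ω^⊥(x,y) iff ∀ z, ω z x → z ≠ y, and ^⊥ω(x,y) iff ∀ z, ω y z → x ≠ z — double dualisation is the identity: ^⊥(ω^⊥) = ω and (^⊥ω)^⊥ = ω. Hence the complement of the equality relation is a dualising object for the monoidal poset of relations on s. -/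
/-- For a binary relation `ω` on a set `s`, with duals taken with respect to the
complement of equality — `ω^⊥ (x, y) ↔ ∀ z, ω z x → z ≠ y` and
`^⊥ω (x, y) ↔ ∀ z, ω y z → x ≠ z` — double dualisation is the identity:
`^⊥(ω^⊥) = ω` and `(^⊥ω)^⊥ = ω`.  Hence the complement of equality is a
dualising object for the monoidal poset of relations on `s`. -/
theorem rel_double_dual (s : Type*) (ω : s → s → Prop) :
    (fun x y => ∀ z, (∀ w, ω w y → w ≠ z) → x ≠ z) = ω ∧
    (fun x y => ∀ z, (∀ w, ω x w → z ≠ w) → z ≠ y) = ω := by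
  constructor <;> funext x y <;> apply propext <;> constructor
  · intro h
    by_contra hn
    exact h x (fun w hw he => hn (he ▸ hw)) rfl
  · intro h z hz
    exact hz x h
  · intro h
    by_contra hn
    exact h y (fun w hw he => hn (he ▸ hw)) rfl
  · intro h z hz
    exact hz y h
end
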